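/- Let n ≥ 1 and F₁,…,Fₙ : [0,1] → [0,1] be continuous, non-decreasing, with Fᵢ(0)=0, Fᵢ(1)=1, with equal entitlements 1/n. If there exists a connected strongly-proportional allocation (cut points 0 = x₀ ≤ ⋯ ≤ xₙ = 1 and bijection σ with F_{σ(k)}(x_k) − F_{σ(k)}(x_{k−1}) > 1/n for all k), then there exist two distinct agents i, j and t ∈ {1,…,n−1} such that the closed intervals Fᵢ⁻¹({t/n}) and Fⱼ⁻¹({t/n}) are disjoint. -/

import Mathlib

open Set

set_option maxHeartbeats 1000000

theorem stmt5 (n : ℕ) (hn : 1 ≤ n) (F : Fin n → ℝ → ℝ)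
    (hcont : ∀ i, ContinuousOn (F i) (Icc 0 1))
    (hmono : ∀ i, MonotoneOn (F i) (Icc 0 1))
    (h0 : ∀ i, F i 0 = 0) (h1 : ∀ i, F i 1 = 1)
    (halloc : ∃ x : Fin (n+1) → ℝ, Monotone x ∧ x 0 = 0 ∧ x (Fin.last n) = 1 ∧
      ∃ σ : Equiv.Perm (Fin n), ∀ k : Fin n,
        1 / (n : ℝ) < F (σ k) (x k.succ) - F (σ k) (x k.castSucc)) :
    ∃ i j : Fin n, i ≠ j ∧ ∃ t : ℕ, 0 < t ∧ t < n ∧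
      Disjoint {x ∈ Icc (0:ℝ) 1 | F i x = (t : ℝ) / (n : ℝ)}
               {x ∈ Icc (0:ℝ) 1 | F j x = (t : ℝ) / (n : ℝ)} := by
  obtain ⟨x, hxm, hx0, hx1, σ, hσ⟩ := halloc
  by_contra hcon
  push_neg at hcon
  have hnR : (0:ℝ) < n := by exact_mod_cast hn
  have hxmem : ∀ k : Fin (n+1), x k ∈ Icc (0:ℝ) 1 := by
    intro k
    constructor
    · rw [← hx0]; exact hxm (Fin.zero_le k)
    · rw [← hx1]; exact hxm (Fin.le_last k)
  -- common marks
  have hY : ∀ t : ℕ, 0 < t → t < n → ∃ y, y ∈ Icc (0:ℝ) 1 ∧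
      ∀ i, F i y = (t : ℝ) / n := by
    intro t ht htn
    set c : ℝ := (t : ℝ) / n with hc
    have hc0 : 0 ≤ c := by positivity
    have hc1 : c ≤ 1 := by
      rw [hc, div_le_one hnR]; exact_mod_cast htn.le
    set S : Fin n → Set ℝ := fun i => {z ∈ Icc (0:ℝ) 1 | F i z = c} with hS
    have hSsub : ∀ i, S i ⊆ Icc (0:ℝ) 1 := fun i z hz => hz.1
    have hSne : ∀ i, (S i).Nonempty := by
      intro i
      have hIVT := intermediate_value_Icc (by norm_num : (0:ℝ) ≤ 1) (hcont i)
      have hcmem : c ∈ Icc (F i 0) (F i 1) := by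
        rw [h0 i, h1 i]; exact ⟨hc0, hc1⟩
      obtain ⟨z, hz, hFz⟩ := hIVT hcmem
      exact ⟨z, hz, hFz⟩
    have hScomp : ∀ i, IsCompact (S i) := by
      intro i
      have : S i = Icc (0:ℝ) 1 ∩ F i ⁻¹' {c} := by
        ext z; simp [hS, Set.mem_inter_iff, and_comm]
      rw [this]
      exact isCompact_Icc.of_isClosed_subset
        ((hcont i).preimage_isClosed_of_isClosed isClosed_Icc isClosed_singleton)
        inter_subset_left
    set a : Fin n → ℝ := fun i => sInf (S i) with ha
    have hamem : ∀ i, a i ∈ S i := fun i => (hScomp i).sInf_mem (hSne i)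
    haveI : Nonempty (Fin n) := ⟨⟨0, by omega⟩⟩
    obtain ⟨i0, hi0⟩ := Finite.exists_max a
    refine ⟨a i0, hSsub i0 (hamem i0), ?_⟩
    intro j
    rcases eq_or_ne j i0 with rfl | hne
    · exact (hamem j).2
    · obtain ⟨z, hz1, hz2⟩ := Set.not_disjoint_iff.mp (hcon i0 j (Ne.symm hne) t ht htn)
      have hyz : a i0 ≤ z := csInf_le (hScomp i0).bddBelow hz1
      have hja : a j ≤ a i0 := hi0 j
      have h1' : F j (a j) ≤ F j (a i0) :=
        hmono j (hSsub j (hamem j)) (hSsub i0 (hamem i0)) hja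
      have h2' : F j (a i0) ≤ F j z :=
        hmono j (hSsub i0 (hamem i0)) (hSsub j hz2) hyz
      rw [(hamem j).2] at h1'
      rw [hz2.2] at h2'
      linarith
  -- main induction: the k-th cut point is beyond everyone's k/n mark
  have key : ∀ k : ℕ, ∀ hk : k ≤ n, ∀ i, (k : ℝ) / n ≤ F i (x ⟨k, by omega⟩) := by
    intro k
    induction k with
    | zero =>
      intro _ i
      have e : (⟨0, by omega⟩ : Fin (n+1)) = 0 := rfl
      rw [e, hx0, h0 i]
      norm_num
    | succ k ih =>
      intro hk1 i
      have hk : k < n := by omega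
      have hlow := ih (le_of_lt hk) (σ ⟨k, hk⟩)
      have h1' := hσ ⟨k, hk⟩
      have ecs : (⟨k, hk⟩ : Fin n).castSucc = (⟨k, by omega⟩ : Fin (n+1)) := rfl
      have esc : (⟨k, hk⟩ : Fin n).succ = (⟨k + 1, by omega⟩ : Fin (n+1)) := rfl
      rw [ecs, esc] at h1'
      have hstrict : ((k : ℝ) + 1) / n < F (σ ⟨k, hk⟩) (x ⟨k + 1, by omega⟩) := by
        have : ((k : ℝ) + 1) / n = (k : ℝ) / n + 1 / n := by ring
        rw [this]; linarith
      rcases Nat.lt_or_ge (k + 1) n with h | h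
      · obtain ⟨y, hyI, hyF⟩ := hY (k + 1) (Nat.succ_pos k) h
        have hcast : ((k + 1 : ℕ) : ℝ) = (k : ℝ) + 1 := by push_cast; ring
        have hylt : y ≤ x ⟨k + 1, by omega⟩ := by
          by_contra hle
          push_neg at hle
          have h2 := hmono (σ ⟨k, hk⟩) (hxmem ⟨k + 1, by omega⟩) hyI hle.le
          have h4 := hyF (σ ⟨k, hk⟩)
          push_cast at h4
          rw [h4] at h2
          linarith
        have := hmono i hyI (hxmem ⟨k + 1, by omega⟩) hylt
        rw [hyF i] at this
        exact this
      · have hkn : k + 1 = n := by omega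
        have e : (⟨k + 1, by omega⟩ : Fin (n+1)) = Fin.last n := by
          ext; simp [hkn]
        rw [e, hx1, h1 i]
        rw [div_le_one hnR]
        exact_mod_cast (by omega : k + 1 ≤ n)
  -- contradiction at the last piece
  have hklast : n - 1 < n := by omega
  have hlow := key (n - 1) (by omega) (σ ⟨n - 1, hklast⟩)
  have h1' := hσ ⟨n - 1, hklast⟩
  have ecs : (⟨n - 1, hklast⟩ : Fin n).castSucc = (⟨n - 1, by omega⟩ : Fin (n+1)) := rfl
  have esc : (⟨n - 1, hklast⟩ : Fin n).succ = Fin.last n := by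
    ext; simp; omega
  rw [ecs, esc, hx1, h1 (σ ⟨n - 1, hklast⟩)] at h1'
  have hcast : ((n - 1 : ℕ) : ℝ) = (n : ℝ) - 1 := by
    rw [Nat.cast_sub hn]; norm_num
  rw [hcast] at hlow
  have : ((n : ℝ) - 1) / n + 1 / n = 1 := by field_simp; ring
  linarith
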